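/- Let m ≥ 2 and define the sequence a_1 = 0 and a_j = ((j-1)/(2m-j))*(a_{j-1}+1) for 2 ≤ j ≤ m-1. Then the sequence (a_j)_{1 ≤ j ≤ m-1} is nondecreasing. -/

import Mathlib

theorem stmt_5 (m : ℕ) (hm : 2 ≤ m) (a : ℕ → ℝ) (ha1 : a 1 = 0)
    (ha : ∀ j, 2 ≤ j → j ≤ m - 1 →
      a j = (((j : ℝ) - 1) / (2 * (m : ℝ) - (j : ℝ))) * (a (j - 1) + 1)) :
    ∀ j k, 1 ≤ j → j ≤ k → k ≤ m - 1 → a j ≤ a k := by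
  have key : ∀ j, 1 ≤ j → j ≤ m - 1 →
      0 ≤ a j ∧ a j * (2 * (m : ℝ) - 2 * j + 1) ≤ (j : ℝ) - 1 := by
    intro j hj
    induction j, hj using Nat.le_induction with
    | base => intro _; simp [ha1]
    | succ n hn ih =>
      intro hle
      have hn' : n ≤ m - 1 := by omega
      obtain ⟨h0, hb⟩ := ih hn'
      have hrec := ha (n + 1) (by omega) hle
      rw [Nat.add_sub_cancel] at hrec
      push_cast at hrec
      have hm2 : (n : ℝ) + 2 ≤ (m : ℝ) := by exact_mod_cast (by omega : n + 2 ≤ m)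
      have hden : (0 : ℝ) < 2 * m - ((n : ℝ) + 1) := by linarith
      have hEq : a (n + 1) * (2 * (m : ℝ) - ((n : ℝ) + 1)) = n * (a n + 1) := by
        rw [hrec]; field_simp; ring
      have hnn : (0 : ℝ) ≤ (n : ℝ) := Nat.cast_nonneg n
      have hpos : 0 ≤ a (n + 1) := by
        rw [hrec]
        apply mul_nonneg
        · apply div_nonneg <;> linarith
        · linarith
      refine ⟨hpos, ?_⟩
      push_cast
      nlinarith [mul_nonneg hnn h0, mul_nonneg hpos hnn, mul_nonneg h0 hnn,
        mul_nonneg hpos (le_of_lt hden)]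
  have step : ∀ n, 1 ≤ n → n + 1 ≤ m - 1 → a n ≤ a (n + 1) := by
    intro n hn hle
    obtain ⟨h0, hb⟩ := key n hn (by omega)
    have hrec := ha (n + 1) (by omega) hle
    rw [Nat.add_sub_cancel] at hrec
    push_cast at hrec
    have hm2 : (n : ℝ) + 2 ≤ (m : ℝ) := by exact_mod_cast (by omega : n + 2 ≤ m)
    have hden : (0 : ℝ) < 2 * m - ((n : ℝ) + 1) := by linarith
    have hEq : a (n + 1) * (2 * (m : ℝ) - ((n : ℝ) + 1)) = n * (a n + 1) := by
      rw [hrec]; field_simp; ring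
    nlinarith [mul_nonneg h0 (le_of_lt hden), mul_nonneg h0 h0]
  intro j k hj hjk
  induction k, hjk using Nat.le_induction with
  | base => intro _; exact le_refl _
  | succ n hjn ih =>
    intro hk
    exact le_trans (ih (by omega)) (step n (by omega) hk)
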